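/- arXiv:2109.06993 — 5 statements merged into one kernel-verified Lean document; each statement's English description precedes it below -/
import Mathlib

section
/- Let G be a finite group with identity e and let H be a subgroup of G. Then H is a perfect code of G (i.e., there exists an inverse-closed subset S ⊆ G \ {e} such that H is an independent set of the Cayley graph Cay(G,S) and every element of G \ H has exactly one neighbor in H) if and only if H admits a left transversal T in G that is inverse-closed (T = T⁻¹). -/
/-- `C` is a perfect code of the Cayley graph `Cay(G, S)`:
`C` is independent and every vertex outside `C` has exactly one neighbor in `C`,
where `g` and `h` are adjacent iff `h * g⁻¹ ∈ S`. -/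
def IsPerfectCode {G : Type*} [Group G] (S : Set G) (C : Set G) : Prop :=
  (∀ c ∈ C, ∀ c' ∈ C, c ≠ c' → c' * c⁻¹ ∉ S) ∧
  ∀ g ∉ C, ∃! c, c ∈ C ∧ c * g⁻¹ ∈ S

/-- A subgroup `H` of a finite group `G` is a perfect code of `G` if and only if
`H` admits an inverse-closed left transversal in `G`. -/
theorem stmt0 {G : Type*} [Group G] [Fintype G] (H : Subgroup G) :
    (∃ S : Set G, (∀ s ∈ S, s⁻¹ ∈ S) ∧ (1 : G) ∉ S ∧
        IsPerfectCode S (H : Set G)) ↔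
    (∃ T : Set G, (∀ t ∈ T, t⁻¹ ∈ T) ∧ ∀ g : G, ∃! t, t ∈ T ∧ g⁻¹ * t ∈ H) := by
  constructor
  · rintro ⟨S, hSinv, hS1, hind, hcov⟩
    refine ⟨insert 1 S, ?_, ?_⟩
    · rintro t (rfl | ht)
      · simp
      · exact Or.inr (hSinv t ht)
    · intro g
      by_cases hg : g ∈ H
      · refine ⟨1, ⟨Set.mem_insert _ _, by simpa using H.inv_mem hg⟩, ?_⟩
        rintro t ⟨ht, htH⟩
        rcases ht with rfl | htS
        · rfl
        · exfalso
          have htH' : t ∈ H := by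
            have h2 := H.mul_mem hg htH
            rwa [← mul_assoc, mul_inv_cancel, one_mul] at h2
          have ht1 : t ≠ 1 := fun h => hS1 (h ▸ htS)
          exact hind 1 (by simpa using H.one_mem) t (by simpa using htH')
            (fun h => ht1 h.symm) (by simpa using htS)
      · obtain ⟨c, ⟨hcH, hcS⟩, hcu⟩ := hcov g (by simpa using hg)
        have hcH' : c ∈ H := by simpa using hcH
        refine ⟨g * c⁻¹, ⟨Or.inr ?_, ?_⟩, ?_⟩
        · have h1 := hSinv _ hcS
          simpa using h1
        · have : g⁻¹ * (g * c⁻¹) = c⁻¹ := by group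
          rw [this]; exact H.inv_mem hcH'
        · rintro t ⟨ht, htH⟩
          rcases ht with rfl | htS
          · exact absurd (by simpa using H.inv_mem htH) hg
          · have h1 : (g⁻¹ * t)⁻¹ ∈ H := H.inv_mem htH
            have h2 : (g⁻¹ * t)⁻¹ * g⁻¹ = t⁻¹ := by group
            have h3 := hcu (g⁻¹ * t)⁻¹ ⟨by simpa using h1, by rw [h2]; exact hSinv t htS⟩
            have : t = g * ((g⁻¹ * t)⁻¹)⁻¹ := by group
            rw [this, h3]
  · rintro ⟨T, hTinv, hT⟩
    refine ⟨T \ ↑H, ?_, ?_, ?_, ?_⟩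
    · rintro s ⟨hsT, hsH⟩
      refine ⟨hTinv s hsT, fun h => hsH ?_⟩
      simpa using H.inv_mem (by simpa using h : s⁻¹ ∈ H)
    · exact fun h => h.2 (by simpa using H.one_mem)
    · intro c hc c' hc' _ hmem
      exact hmem.2 (by
        have : c' * c⁻¹ ∈ H := H.mul_mem (by simpa using hc') (H.inv_mem (by simpa using hc))
        simpa using this)
    · intro g hg
      have hgH : g ∉ H := by simpa using hg
      obtain ⟨t, ⟨htT, htH⟩, htu⟩ := hT g
      have htnH : t ∉ H := by
        intro ht
        apply hgH
        have h1 : (g⁻¹ * t) * t⁻¹ ∈ H := H.mul_mem htH (H.inv_mem ht)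
        have h2 : (g⁻¹ * t) * t⁻¹ = g⁻¹ := by group
        rw [h2] at h1
        simpa using H.inv_mem h1
      refine ⟨t⁻¹ * g, ⟨?_, ?_, ?_⟩, ?_⟩
      · have h1 : (g⁻¹ * t)⁻¹ ∈ H := H.inv_mem htH
        have h2 : (g⁻¹ * t)⁻¹ = t⁻¹ * g := by group
        rw [h2] at h1
        simpa using h1
      · have h2 : t⁻¹ * g * g⁻¹ = t⁻¹ := by group
        rw [h2]; exact hTinv t htT
      · have h2 : t⁻¹ * g * g⁻¹ = t⁻¹ := by group
        rw [h2]
        intro h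
        exact htnH (by simpa using H.inv_mem (by simpa using h : t⁻¹ ∈ H))
      · rintro c ⟨hcH, hcT, hcHn⟩
        have h1 : g⁻¹ * (c * g⁻¹)⁻¹ = c⁻¹ := by group
        have h2 := htu (c * g⁻¹)⁻¹ ⟨hTinv _ hcT, by rw [h1]; exact H.inv_mem (by simpa using hcH)⟩
        have h3 : c = ((c * g⁻¹)⁻¹)⁻¹ * g := by group
        rw [h3, h2]
end

section
/- Let G be a finite group and H a normal subgroup of G. Then H is a perfect code of G if and only if for every g ∈ G with g² ∈ H there exists h ∈ H with (gh)² = e. -/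
open Classical in
/-- An auxiliary choice of coset representatives: for each coset `q` of order
dividing 2 we pick an "involution" representative (provided by `invol`), and
otherwise we break the pair `{q, q⁻¹}` using an injection `e` into `ℕ`. -/
noncomputable def auxRep {G : Type*} [Group G] (H : Subgroup G) [H.Normal]
    (e : G ⧸ H → ℕ)
    (invol : ∀ q : G ⧸ H, q * q = 1 → ∃ t : G, (t : G ⧸ H) = q ∧ t * t = 1) :
    G ⧸ H → G := fun q =>
  if hq : q * q = 1 then (invol q hq).choose
  else if e q ≤ e q⁻¹ then q.out else ((q⁻¹).out)⁻¹

theorem auxRep_coe {G : Type*} [Group G] (H : Subgroup G) [H.Normal]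
    (e : G ⧸ H → ℕ)
    (invol : ∀ q : G ⧸ H, q * q = 1 → ∃ t : G, (t : G ⧸ H) = q ∧ t * t = 1)
    (q : G ⧸ H) : QuotientGroup.mk (auxRep H e invol q) = q := by
  unfold auxRep
  classical
  split_ifs with h1 h2
  · exact (invol q h1).choose_spec.1
  · exact QuotientGroup.out_eq' q
  · rw [QuotientGroup.mk_inv, QuotientGroup.out_eq', inv_inv]

theorem auxRep_sq {G : Type*} [Group G] (H : Subgroup G) [H.Normal]
    (e : G ⧸ H → ℕ)
    (invol : ∀ q : G ⧸ H, q * q = 1 → ∃ t : G, (t : G ⧸ H) = q ∧ t * t = 1)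
    (q : G ⧸ H) (hq : q * q = 1) :
    auxRep H e invol q * auxRep H e invol q = 1 := by
  unfold auxRep
  rw [dif_pos hq]
  exact (invol q hq).choose_spec.2

theorem auxRep_inv {G : Type*} [Group G] (H : Subgroup G) [H.Normal]
    (e : G ⧸ H → ℕ) (he : Function.Injective e)
    (invol : ∀ q : G ⧸ H, q * q = 1 → ∃ t : G, (t : G ⧸ H) = q ∧ t * t = 1)
    (q : G ⧸ H) : auxRep H e invol q⁻¹ = (auxRep H e invol q)⁻¹ := by
  by_cases hq : q * q = 1
  · have hqi : q⁻¹ = q := inv_eq_of_mul_eq_one_left hq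
    rw [hqi]
    exact (inv_eq_of_mul_eq_one_left (auxRep_sq H e invol q hq)).symm
  · have hq' : q⁻¹ * q⁻¹ ≠ 1 := by
      intro h
      apply hq
      have := congrArg Inv.inv h
      simpa [mul_inv_rev] using this
    have hne : q ≠ q⁻¹ := by
      intro h
      apply hq
      nth_rewrite 2 [h]
      exact mul_inv_cancel q
    have hee : e q ≠ e q⁻¹ := fun h => hne (he h)
    unfold auxRep
    rw [dif_neg hq, dif_neg hq']
    simp only [inv_inv]
    rcases lt_or_ge (e q) (e q⁻¹) with h | h
    · rw [if_pos h.le, if_neg (not_le.2 h)]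
    · have h' : e q⁻¹ < e q := lt_of_le_of_ne h (Ne.symm hee)
      rw [if_neg (not_le.2 h'), if_pos h'.le, inv_inv]

/-- A normal subgroup `H` of a finite group `G` is a perfect code of `G` iff
for every `g ∈ G` with `g² ∈ H` there exists `h ∈ H` with `(gh)² = e`. -/
theorem stmt1 {G : Type*} [Group G] [Fintype G] (H : Subgroup G) [H.Normal] :
    (∃ S : Set G, (∀ s ∈ S, s⁻¹ ∈ S) ∧ (1 : G) ∉ S ∧
        IsPerfectCode S (H : Set G)) ↔
    (∀ g : G, g * g ∈ H → ∃ h ∈ H, (g * h) * (g * h) = 1) := by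
  classical
  constructor
  · rintro ⟨S, hSinv, hS1, hind, hdom⟩ g hg
    by_cases hgH : g ∈ H
    · exact ⟨g⁻¹, H.inv_mem hgH, by simp⟩
    · obtain ⟨c, ⟨hcH, hcS⟩, huniq⟩ := hdom g hgH
      have hcH' : c ∈ H := hcH
      have hmem : g * c⁻¹ * g ∈ H := by
        have h1 : g * c⁻¹ * g⁻¹ ∈ H :=
          Subgroup.Normal.conj_mem ‹H.Normal› c⁻¹ (H.inv_mem hcH') g
        have : (g * c⁻¹ * g⁻¹) * (g * g) ∈ H := H.mul_mem h1 hg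
        simpa [mul_assoc] using this
      have hS' : (g * c⁻¹ * g) * g⁻¹ ∈ S := by
        have : (c * g⁻¹)⁻¹ ∈ S := hSinv _ hcS
        simpa [mul_inv_rev, mul_assoc] using this
      have heq : g * c⁻¹ * g = c := huniq _ ⟨hmem, hS'⟩
      refine ⟨c⁻¹, H.inv_mem hcH', ?_⟩
      calc (g * c⁻¹) * (g * c⁻¹) = (g * c⁻¹ * g) * c⁻¹ := by group
        _ = c * c⁻¹ := by rw [heq]
        _ = 1 := mul_inv_cancel c
  · intro hyp
    haveI : Fintype (G ⧸ H) := Fintype.ofFinite _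
    set e : G ⧸ H → ℕ := fun q => (Fintype.equivFin (G ⧸ H) q : ℕ) with he_def
    have he : Function.Injective e := fun a b h =>
      (Fintype.equivFin (G ⧸ H)).injective (Fin.ext h)
    have invol : ∀ q : G ⧸ H, q * q = 1 → ∃ t : G, (t : G ⧸ H) = q ∧ t * t = 1 := by
      intro q hq
      obtain ⟨g, rfl⟩ := QuotientGroup.mk_surjective q
      have hgg : g * g ∈ H := by
        rw [← QuotientGroup.eq_one_iff (N := H)]
        simpa using hq
      obtain ⟨h, hh, hinv⟩ := hyp g hgg
      refine ⟨g * h, ?_, hinv⟩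
      have : ((h : G) : G ⧸ H) = 1 := (QuotientGroup.eq_one_iff h).2 hh
      simp [this]
    set r : G ⧸ H → G := auxRep H e invol with hr
    have r_coe : ∀ q : G ⧸ H, (r q : G ⧸ H) = q := fun q => auxRep_coe H e invol q
    have r_inv : ∀ q, r q⁻¹ = (r q)⁻¹ := auxRep_inv H e he invol
    refine ⟨{x : G | (x : G ⧸ H) ≠ 1 ∧ r (x : G ⧸ H) = x}, ?_, ?_, ?_, ?_⟩
    · rintro s ⟨hs1, hs2⟩
      refine ⟨?_, ?_⟩
      · rw [QuotientGroup.mk_inv]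
        exact inv_ne_one.2 hs1
      · rw [QuotientGroup.mk_inv, r_inv, hs2]
    · rintro ⟨h1, -⟩
      exact h1 (by simp)
    · rintro c hc c' hc' hne ⟨habs, -⟩
      apply habs
      rw [QuotientGroup.eq_one_iff]
      exact H.mul_mem hc' (H.inv_mem hc)
    · intro g hgH
      have hq1 : ((g : G ⧸ H))⁻¹ ≠ 1 := by
        simp only [ne_eq, inv_eq_one]
        rw [QuotientGroup.eq_one_iff]
        exact hgH
      refine ⟨r ((g : G ⧸ H))⁻¹ * g, ⟨?_, ?_⟩, ?_⟩
      · rw [SetLike.mem_coe, ← QuotientGroup.eq_one_iff (N := H)]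
        rw [QuotientGroup.mk_mul, r_coe]
        simp
      · have : r ((g : G ⧸ H))⁻¹ * g * g⁻¹ = r ((g : G ⧸ H))⁻¹ := by group
        rw [this]
        exact ⟨by rw [r_coe]; exact hq1, by rw [r_coe]⟩
      · rintro c ⟨hcH, hc1, hc2⟩
        have hcq : ((c * g⁻¹ : G) : G ⧸ H) = ((g : G ⧸ H))⁻¹ := by
          rw [QuotientGroup.mk_mul]
          rw [(QuotientGroup.eq_one_iff c).2 hcH]
          simp
        rw [hcq] at hc2
        have : c * g⁻¹ * g = r ((g : G ⧸ H))⁻¹ * g := by rw [hc2]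
        simpa [mul_assoc] using this
end

section
/- Let G be a finite group and H ≤ G a 2-group (|H| is a power of 2). Then H is a perfect code of G if and only if Φ(N_G(H), H) holds, i.e., for every g in the normalizer N_G(H) with g² ∈ H there exists h ∈ H with (gh)² = e. -/
open Set

namespace PCaux

variable {G : Type*} [Group G]

/-- right coset `H v` -/
def R (H : Subgroup G) (v : G) : Set G := {y | y * v⁻¹ ∈ H}

/-- left coset `v H` -/
def L (H : Subgroup G) (v : G) : Set G := {y | v⁻¹ * y ∈ H}

/-- double coset `H v H` -/
def D (H : Subgroup G) (v : G) : Set G := {y | ∃ a ∈ H, ∃ b ∈ H, y = a * v * b}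

variable {H : Subgroup G} {v u y z g : G}

lemma mem_R : y ∈ R H v ↔ y * v⁻¹ ∈ H := Iff.rfl
lemma mem_L : y ∈ L H v ↔ v⁻¹ * y ∈ H := Iff.rfl

lemma self_mem_R : v ∈ R H v := by simp [mem_R, one_mem]
lemma self_mem_L : v ∈ L H v := by simp [mem_L, one_mem]

lemma R_eq_of_mem (h : y ∈ R H v) : R H y = R H v := by
  ext z
  rw [mem_R] at h ⊢
  rw [mem_R]
  constructor
  · intro hz; have := mul_mem hz h; simpa [mul_assoc] using this
  · intro hz; have := mul_mem hz (inv_mem h); simpa [mul_assoc] using this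

lemma L_eq_of_mem (h : y ∈ L H v) : L H y = L H v := by
  ext z
  rw [mem_L] at h ⊢
  rw [mem_L]
  constructor
  · intro hz; have := mul_mem h hz; simpa [mul_assoc] using this
  · intro hz; have := mul_mem (inv_mem h) hz; simpa [mul_assoc] using this

lemma R_eq_of_nonempty (h : (R H u ∩ R H v).Nonempty) : R H u = R H v := by
  obtain ⟨z, hz1, hz2⟩ := h
  rw [← R_eq_of_mem hz1, R_eq_of_mem hz2]

lemma L_eq_of_nonempty (h : (L H u ∩ L H v).Nonempty) : L H u = L H v := by
  obtain ⟨z, hz1, hz2⟩ := h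
  rw [← L_eq_of_mem hz1, L_eq_of_mem hz2]

lemma R_mul_left (h : y ∈ R H v) (hh : g ∈ H) : g * y ∈ R H v := by
  rw [mem_R] at h ⊢
  simpa [mul_assoc] using mul_mem hh h

lemma L_mul_right (h : y ∈ L H v) (hh : g ∈ H) : y * g ∈ L H v := by
  rw [mem_L] at h ⊢
  simpa [mul_assoc] using mul_mem h hh

lemma R_eq_image : R H v = (fun h => h * v) '' (H : Set G) := by
  ext y
  simp only [mem_R, Set.mem_image, SetLike.mem_coe]
  constructor
  · intro h; exact ⟨y * v⁻¹, h, by group⟩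
  · rintro ⟨h, hh, rfl⟩; simpa using hh

lemma R_ncard : (R H v).ncard = Nat.card H := by
  rw [R_eq_image, Set.ncard_image_of_injective _ (mul_left_injective v),
    ← Nat.card_coe_set_eq]
  simp [SetLike.coe_sort_coe]

lemma L_eq_image : L H v = (fun h => v * h) '' (H : Set G) := by
  ext y
  simp only [mem_L, Set.mem_image, SetLike.mem_coe]
  constructor
  · intro h; exact ⟨v⁻¹ * y, h, by group⟩
  · rintro ⟨h, hh, rfl⟩; simpa using hh

lemma L_ncard : (L H v).ncard = Nat.card H := by
  rw [L_eq_image, Set.ncard_image_of_injective _ (mul_right_injective v),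
    ← Nat.card_coe_set_eq]
  simp [SetLike.coe_sort_coe]

lemma mem_D : y ∈ D H v ↔ ∃ a ∈ H, ∃ b ∈ H, y = a * v * b := Iff.rfl

lemma self_mem_D : v ∈ D H v := ⟨1, one_mem _, 1, one_mem _, by simp⟩

lemma R_subset_D : R H v ⊆ D H v := by
  intro y hy
  exact ⟨y * v⁻¹, hy, 1, one_mem _, by group⟩

lemma L_subset_D : L H v ⊆ D H v := by
  intro y hy
  exact ⟨1, one_mem _, v⁻¹ * y, hy, by group⟩

lemma D_eq_of_mem (h : y ∈ D H v) : D H y = D H v := by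
  obtain ⟨a, ha, b, hb, rfl⟩ := h
  ext z
  constructor
  · rintro ⟨c, hc, d, hd, rfl⟩
    exact ⟨c * a, mul_mem hc ha, b * d, mul_mem hb hd, by group⟩
  · rintro ⟨c, hc, d, hd, rfl⟩
    exact ⟨c * a⁻¹, mul_mem hc (inv_mem ha), b⁻¹ * d, mul_mem (inv_mem hb) hd, by group⟩

lemma D_eq_of_nonempty (h : (D H u ∩ D H v).Nonempty) : D H u = D H v := by
  obtain ⟨z, hz1, hz2⟩ := h
  rw [← D_eq_of_mem hz1, D_eq_of_mem hz2]

lemma D_mul_left (h : y ∈ D H v) (hh : g ∈ H) : g * y ∈ D H v := by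
  obtain ⟨a, ha, b, hb, rfl⟩ := h
  exact ⟨g * a, mul_mem hh ha, b, hb, by group⟩

lemma D_mul_right (h : y ∈ D H v) (hh : g ∈ H) : y * g ∈ D H v := by
  obtain ⟨a, ha, b, hb, rfl⟩ := h
  exact ⟨a, ha, b * g, mul_mem hb hh, by group⟩

lemma D_inv_set : (D H v)⁻¹ = D H v⁻¹ := by
  ext z
  simp only [Set.mem_inv]
  constructor
  · rintro ⟨a, ha, b, hb, hz⟩
    refine ⟨b⁻¹, inv_mem hb, a⁻¹, inv_mem ha, ?_⟩
    have : z = (a * v * b)⁻¹ := by rw [← hz]; simp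
    rw [this]; group
  · rintro ⟨a, ha, b, hb, rfl⟩
    exact ⟨b⁻¹, inv_mem hb, a⁻¹, inv_mem ha, by group⟩

lemma inv_mem_D (h : y ∈ D H v) : y⁻¹ ∈ D H v⁻¹ := by
  rw [← D_inv_set, Set.mem_inv, inv_inv]; exact h

lemma D_eq_R_of_norm (hg : g ∈ Subgroup.normalizer (H : Set G)) : D H g = R H g := by
  apply Set.Subset.antisymm
  · rintro y ⟨a, ha, b, hb, rfl⟩
    rw [mem_R]
    have : a * g * b * g⁻¹ = a * (g * b * g⁻¹) := by group
    rw [this]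
    exact mul_mem ha ((Subgroup.mem_normalizer_iff.mp hg b).mp hb)
  · exact R_subset_D

lemma exists_not_conj [Finite G] (hg : g ∉ Subgroup.normalizer (H : Set G)) :
    ∃ h ∈ H, g * h * g⁻¹ ∉ H := by
  by_contra hc
  push_neg at hc
  exact hg (Subgroup.mem_normalizer_fintype fun n hn => hc n hn)

lemma D_ncard_dvd [Fintype G] (v : G) :
    (D H v).ncard ∣ Nat.card H * Nat.card H := by
  classical
  letI : MulAction (↥H × ↥H) G :=
    { smul := fun p g => (p.1 : G) * g * (p.2 : G)⁻¹
      one_smul := by intro b; show ((1:↥H) : G) * b * ((1:↥H) : G)⁻¹ = b; simp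
      mul_smul := by
        rintro ⟨a, b⟩ ⟨c, d⟩ x
        show ((a*c : ↥H) : G) * x * ((b*d : ↥H) : G)⁻¹
            = (a : G) * ((c : G) * x * (d : G)⁻¹) * (b : G)⁻¹
        push_cast
        group }
  have horb : MulAction.orbit (↥H × ↥H) v = D H v := by
    ext y
    constructor
    · rintro ⟨⟨a, b⟩, rfl⟩
      exact ⟨a, a.2, (b : G)⁻¹, inv_mem b.2, rfl⟩
    · rintro ⟨a, ha, b, hb, rfl⟩
      refine ⟨(⟨⟨a, ha⟩, ⟨b⁻¹, inv_mem hb⟩⟩ : ↥H × ↥H), ?_⟩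
      show a * v * (b⁻¹)⁻¹ = a * v * b
      simp
  haveI : Fintype (MulAction.orbit (↥H × ↥H) v) := Fintype.ofFinite _
  haveI : Fintype (MulAction.stabilizer (↥H × ↥H) v) := Fintype.ofFinite _
  have hos := MulAction.card_orbit_mul_card_stabilizer_eq_card_group (↥H × ↥H) v
  have hc1 : (D H v).ncard = Fintype.card (MulAction.orbit (↥H × ↥H) v) := by
    rw [← horb, ← Nat.card_coe_set_eq, Nat.card_eq_fintype_card]
  have hc2 : Fintype.card (↥H × ↥H) = Nat.card H * Nat.card H := by
    rw [Fintype.card_prod, Nat.card_eq_fintype_card]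
  rw [← hc2, ← hos, hc1]
  exact Dvd.intro _ rfl

lemma two_mul_card_le [Fintype G] (hg : g ∉ Subgroup.normalizer (H : Set G)) :
    2 * Nat.card H ≤ (D H g).ncard := by
  obtain ⟨h, hh, hnc⟩ := exists_not_conj hg
  have hsub2 : R H (g * h) ⊆ D H g := by
    intro y hy
    exact ⟨y * (g * h)⁻¹, hy, h, hh, by group⟩
  have hgh : g * h ∉ R H g := by
    rw [mem_R]
    exact hnc
  have hdisj : Disjoint (R H g) (R H (g * h)) := by
    rw [Set.disjoint_iff_inter_eq_empty]
    by_contra hne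
    have := R_eq_of_nonempty (Set.nonempty_iff_ne_empty.mpr hne)
    exact hgh (this ▸ self_mem_R)
  have hsub : R H g ∪ R H (g * h) ⊆ D H g := Set.union_subset R_subset_D hsub2
  calc 2 * Nat.card H = (R H g).ncard + (R H (g * h)).ncard := by
        rw [R_ncard, R_ncard]; ring
    _ = (R H g ∪ R H (g * h)).ncard := (Set.ncard_union_eq hdisj).symm
    _ ≤ (D H g).ncard := Set.ncard_le_ncard hsub (Set.toFinite _)

lemma D_ncard_even [Fintype G] {k : ℕ} (h2 : Nat.card H = 2 ^ k)
    (hg : g ∉ Subgroup.normalizer (H : Set G)) : 2 * Nat.card H ∣ (D H g).ncard := by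
  have hdvd : (D H g).ncard ∣ 2 ^ (k + k) := by
    have := D_ncard_dvd (H := H) g
    rwa [h2, ← pow_add] at this
  obtain ⟨m, hm, hDm⟩ := (Nat.dvd_prime_pow Nat.prime_two).mp hdvd
  have hle : 2 ^ (k + 1) ≤ 2 ^ m := by
    rw [← hDm]
    calc 2 ^ (k + 1) = 2 * Nat.card H := by rw [h2]; ring
      _ ≤ (D H g).ncard := two_mul_card_le hg
  have : k + 1 ≤ m := (Nat.pow_le_pow_iff_right (by norm_num)).mp hle
  rw [hDm]
  calc 2 * Nat.card H = 2 ^ (k + 1) := by rw [h2]; ring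
    _ ∣ 2 ^ m := pow_dvd_pow 2 this

lemma R_subset_of_closed {V : Set G} (hcl : ∀ v ∈ V, ∀ h ∈ H, h * v ∈ V)
    (hy : y ∈ V) : R H y ⊆ V := by
  intro z hz
  have := hcl y hy (z * y⁻¹) hz
  simpa using this

lemma L_subset_of_closed {V : Set G} (hcl : ∀ v ∈ V, ∀ h ∈ H, v * h ∈ V)
    (hy : y ∈ V) : L H y ⊆ V := by
  intro z hz
  have := hcl y hy (y⁻¹ * z) hz
  simpa [mul_assoc] using this

lemma zip [Fintype G] (x : G) : ∀ (n : ℕ) (V₁ V₂ : Set G), V₁.ncard ≤ n →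
    V₁ ⊆ D H x → V₂ ⊆ D H x →
    (∀ v ∈ V₁, ∀ h ∈ H, h * v ∈ V₁) → (∀ v ∈ V₂, ∀ h ∈ H, v * h ∈ V₂) →
    V₁.ncard = V₂.ncard →
    ∃ T : Set G, T ⊆ V₁ ∧ T ⊆ V₂ ∧
      (∀ v ∈ V₁, ∃! t, t ∈ T ∧ t * v⁻¹ ∈ H) ∧
      (∀ v ∈ V₂, ∃! t, t ∈ T ∧ v⁻¹ * t ∈ H) := by
  intro n
  induction n with
  | zero =>
    intro V₁ V₂ hn _ _ _ _ hcard
    have h1 : V₁ = ∅ := by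
      rw [← Set.ncard_eq_zero (Set.toFinite _)]; omega
    have h2 : V₂ = ∅ := by
      rw [← Set.ncard_eq_zero (Set.toFinite _)]; omega
    subst h1; subst h2
    exact ⟨∅, by simp, by simp, by simp, by simp⟩
  | succ n ih =>
    intro V₁ V₂ hn hs1 hs2 hc1 hc2 hcard
    rcases Set.eq_empty_or_nonempty V₁ with rfl | ⟨y₁, hy₁⟩
    · have h2 : V₂ = ∅ := by
        rw [← Set.ncard_eq_zero (Set.toFinite _)]
        simpa using hcard.symm
      subst h2
      exact ⟨∅, by simp, by simp, by simp, by simp⟩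
    · have hV₂ne : V₂.Nonempty := by
        rw [Set.nonempty_iff_ne_empty]
        intro h; rw [h] at hcard
        simp only [Set.ncard_empty] at hcard
        exact (Set.ncard_pos (Set.toFinite _)).mpr ⟨y₁, hy₁⟩ |>.ne' hcard
      obtain ⟨y₂, hy₂⟩ := hV₂ne
      obtain ⟨a₁, ha₁, b₁, hb₁, hy₁e⟩ := hs1 hy₁
      obtain ⟨a₂, ha₂, b₂, hb₂, hy₂e⟩ := hs2 hy₂
      set t₀ := a₂ * x * b₁ with ht₀def
      have ht₀R : t₀ ∈ R H y₁ := by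
        rw [mem_R, hy₁e]
        have : t₀ * (a₁ * x * b₁)⁻¹ = a₂ * a₁⁻¹ := by rw [ht₀def]; group
        rw [this]
        exact mul_mem ha₂ (inv_mem ha₁)
      have ht₀L : t₀ ∈ L H y₂ := by
        rw [mem_L, hy₂e]
        have : (a₂ * x * b₂)⁻¹ * t₀ = b₂⁻¹ * b₁ := by rw [ht₀def]; group
        rw [this]
        exact mul_mem (inv_mem hb₂) hb₁
      have hRsub : R H y₁ ⊆ V₁ := R_subset_of_closed hc1 hy₁
      have hLsub : L H y₂ ⊆ V₂ := L_subset_of_closed hc2 hy₂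
      have hcardH : 1 ≤ Nat.card H := Nat.card_pos
      have hd1 : (V₁ \ R H y₁).ncard = V₁.ncard - Nat.card H := by
        rw [Set.ncard_diff hRsub (Set.toFinite _), R_ncard]
      have hd2 : (V₂ \ L H y₂).ncard = V₂.ncard - Nat.card H := by
        rw [Set.ncard_diff hLsub (Set.toFinite _), L_ncard]
      have hV₁big : Nat.card H ≤ V₁.ncard := by
        rw [← R_ncard (H := H) (v := y₁)]
        exact Set.ncard_le_ncard hRsub (Set.toFinite _)
      have hn' : (V₁ \ R H y₁).ncard ≤ n := by omega
      have hcard' : (V₁ \ R H y₁).ncard = (V₂ \ L H y₂).ncard := by omega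
      have hcl1' : ∀ v ∈ V₁ \ R H y₁, ∀ h ∈ H, h * v ∈ V₁ \ R H y₁ := by
        rintro v ⟨hv, hvR⟩ h hh
        refine ⟨hc1 v hv h hh, fun hc => hvR ?_⟩
        have := R_mul_left hc (inv_mem hh)
        simpa using this
      have hcl2' : ∀ v ∈ V₂ \ L H y₂, ∀ h ∈ H, v * h ∈ V₂ \ L H y₂ := by
        rintro v ⟨hv, hvL⟩ h hh
        refine ⟨hc2 v hv h hh, fun hc => hvL ?_⟩
        have := L_mul_right hc (inv_mem hh)
        simpa [mul_assoc] using this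
      obtain ⟨T', hT'1, hT'2, hT'R, hT'L⟩ :=
        ih (V₁ \ R H y₁) (V₂ \ L H y₂) hn'
          ((Set.diff_subset).trans hs1) ((Set.diff_subset).trans hs2)
          hcl1' hcl2' hcard'
      refine ⟨insert t₀ T', ?_, ?_, ?_, ?_⟩
      · exact Set.insert_subset (hRsub ht₀R) (hT'1.trans Set.diff_subset)
      · exact Set.insert_subset (hLsub ht₀L) (hT'2.trans Set.diff_subset)
      · intro v hv
        by_cases hvR : v ∈ R H y₁
        · have hRv : R H v = R H y₁ := R_eq_of_mem hvR
          refine ⟨t₀, ⟨Set.mem_insert _ _, by rw [← mem_R, hRv]; exact ht₀R⟩, ?_⟩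
          rintro t' ⟨ht'T, ht'H⟩
          rcases Set.mem_insert_iff.mp ht'T with rfl | ht'T'
          · rfl
          · exact absurd ((hRv ▸ ht'H : t' ∈ R H y₁)) (hT'1 ht'T').2
        · obtain ⟨t, ⟨htT', htH⟩, huniq⟩ := hT'R v ⟨hv, hvR⟩
          refine ⟨t, ⟨Set.mem_insert_of_mem _ htT', htH⟩, ?_⟩
          rintro t' ⟨ht'T, ht'H⟩
          rcases Set.mem_insert_iff.mp ht'T with rfl | ht'T'
          · exfalso
            have : R H v = R H y₁ := R_eq_of_nonempty ⟨t₀, ht'H, ht₀R⟩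
            exact hvR (this ▸ self_mem_R)
          · exact huniq t' ⟨ht'T', ht'H⟩
      · intro v hv
        by_cases hvL : v ∈ L H y₂
        · have hLv : L H v = L H y₂ := L_eq_of_mem hvL
          refine ⟨t₀, ⟨Set.mem_insert _ _, by rw [← mem_L, hLv]; exact ht₀L⟩, ?_⟩
          rintro t' ⟨ht'T, ht'H⟩
          rcases Set.mem_insert_iff.mp ht'T with rfl | ht'T'
          · rfl
          · exact absurd ((hLv ▸ ht'H : t' ∈ L H y₂)) (hT'2 ht'T').2
        · obtain ⟨t, ⟨htT', htH⟩, huniq⟩ := hT'L v ⟨hv, hvL⟩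
          refine ⟨t, ⟨Set.mem_insert_of_mem _ htT', htH⟩, ?_⟩
          rintro t' ⟨ht'T, ht'H⟩
          rcases Set.mem_insert_iff.mp ht'T with rfl | ht'T'
          · exfalso
            have : L H v = L H y₂ := L_eq_of_nonempty ⟨t₀, ht'H, ht₀L⟩
            exact hvL (this ▸ self_mem_L)
          · exact huniq t' ⟨ht'T', ht'H⟩

lemma self_paired_trans (hselfg : g⁻¹ ∈ D H g) (hvg : v ∈ D H g) :
    v⁻¹ ∈ D H v := by
  have hDv : D H v = D H g := D_eq_of_mem hvg
  have h1 : D H v⁻¹ = D H v := by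
    rw [← D_inv_set, hDv, D_inv_set, D_eq_of_mem hselfg]
  exact h1 ▸ self_mem_D

lemma self_paired_trans' (hselfg : g⁻¹ ∈ D H g) (hvg : v⁻¹ ∈ D H g) :
    v⁻¹ ∈ D H v := by
  have h1 : v ∈ D H v⁻¹ := by
    have := self_paired_trans (v := v⁻¹) hselfg hvg
    rwa [inv_inv] at this
  rw [D_eq_of_mem h1]
  exact self_mem_D

lemma closed_diff {V A : Set G} (hV : ∀ v ∈ V, ∀ h ∈ H, h * v ∈ V)
    (hA : ∀ v ∈ A, ∀ h ∈ H, h * v ∈ A) :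
    ∀ v ∈ V \ A, ∀ h ∈ H, h * v ∈ V \ A := by
  rintro v ⟨hv, hvA⟩ h hh
  refine ⟨hV v hv h hh, fun hc => hvA ?_⟩
  have := hA _ hc h⁻¹ (inv_mem hh)
  simpa using this

lemma main [Fintype G]
    (hΦ : ∀ g ∈ Subgroup.normalizer (H : Set G), g * g ∈ H → ∃ h ∈ H, (g * h) * (g * h) = 1) :
    ∀ (n : ℕ) (V : Set G), V.ncard ≤ n →
    (∀ v ∈ V, ∀ h ∈ H, h * v ∈ V) →
    (∀ v ∈ V, v⁻¹ ∉ D H v → D H v ⊆ V ∧ D H v⁻¹ ⊆ V) →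
    (∀ v ∈ V, v ∉ Subgroup.normalizer (H : Set G) → 2 * Nat.card H ∣ (V ∩ D H v).ncard) →
    ∃ T : Set G, T ⊆ V ∧ (∀ t ∈ T, t⁻¹ ∈ T) ∧
      ∀ v ∈ V, ∃! t, t ∈ T ∧ t * v⁻¹ ∈ H := by
  intro n
  induction n with
  | zero =>
    intro V hn _ _ _
    have h1 : V = ∅ := by rw [← Set.ncard_eq_zero (Set.toFinite _)]; omega
    subst h1
    exact ⟨∅, by simp, by simp, by simp⟩
  | succ n ih =>
    intro V hn hcl hJ2 hJ3
    rcases Set.eq_empty_or_nonempty V with rfl | ⟨g, hg⟩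
    · exact ⟨∅, by simp, by simp, by simp⟩
    have hcardH : 1 ≤ Nat.card H := Nat.card_pos
    by_cases hself : g⁻¹ ∈ D H g
    · by_cases hN : g ∈ Subgroup.normalizer (H : Set G)
      · -- Case A1
        have hRg : g⁻¹ ∈ R H g := by rwa [D_eq_R_of_norm hN] at hself
        have hgg : g * g ∈ H := by
          rw [mem_R] at hRg
          rwa [← mul_inv_rev, inv_mem_iff] at hRg
        obtain ⟨h, hh, hth⟩ := hΦ g hN hgg
        have htR : g * h ∈ R H g :=
          (Subgroup.mem_normalizer_iff.mp hN h).mp hh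
        have htinv : (g * h)⁻¹ = g * h := inv_eq_of_mul_eq_one_right hth
        have hRsubV : R H g ⊆ V := R_subset_of_closed hcl hg
        have hd : (V \ R H g).ncard = V.ncard - Nat.card H := by
          rw [Set.ncard_diff hRsubV (Set.toFinite _), R_ncard]
        have hVbig : Nat.card H ≤ V.ncard := by
          rw [← R_ncard (H := H) (v := g)]
          exact Set.ncard_le_ncard hRsubV (Set.toFinite _)
        have hn' : (V \ R H g).ncard ≤ n := by omega
        have hclA : ∀ v ∈ R H g, ∀ h' ∈ H, h' * v ∈ R H g :=
          fun v hv h' hh' => R_mul_left hv hh'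
        have hcl' := closed_diff hcl hclA
        have hJ2' : ∀ v ∈ V \ R H g, v⁻¹ ∉ D H v →
            D H v ⊆ V \ R H g ∧ D H v⁻¹ ⊆ V \ R H g := by
          rintro v ⟨hv, hvR⟩ hvs
          obtain ⟨hD1, hD2⟩ := hJ2 v hv hvs
          constructor
          · intro z hz
            refine ⟨hD1 hz, fun hc => hvs ?_⟩
            have he : D H v = D H g := by
              rw [← D_eq_of_mem hz, D_eq_of_mem (R_subset_D hc)]
            exact self_paired_trans hself (he ▸ self_mem_D)
          · intro z hz
            refine ⟨hD2 hz, fun hc => hvs ?_⟩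
            have he : D H v⁻¹ = D H g := by
              rw [← D_eq_of_mem hz, D_eq_of_mem (R_subset_D hc)]
            exact self_paired_trans' hself (he ▸ self_mem_D)
        have hJ3' : ∀ v ∈ V \ R H g, v ∉ Subgroup.normalizer (H : Set G) →
            2 * Nat.card H ∣ ((V \ R H g) ∩ D H v).ncard := by
          rintro v ⟨hv, hvR⟩ hvN
          have hset : (V \ R H g) ∩ D H v = V ∩ D H v := by
            ext z
            simp only [Set.mem_inter_iff, Set.mem_diff]
            constructor
            · rintro ⟨⟨h1, _⟩, h2⟩; exact ⟨h1, h2⟩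
            · rintro ⟨h1, h2⟩
              refine ⟨⟨h1, fun hc => hvR ?_⟩, h2⟩
              have he : D H v = D H g := by
                rw [← D_eq_of_mem h2, D_eq_of_mem (R_subset_D hc)]
              have : v ∈ D H g := he ▸ self_mem_D
              rwa [D_eq_R_of_norm hN] at this
          rw [hset]
          exact hJ3 v hv hvN
        obtain ⟨T', hT'V, hT'inv, hT'u⟩ := ih (V \ R H g) hn' hcl' hJ2' hJ3'
        refine ⟨insert (g * h) T', ?_, ?_, ?_⟩
        · exact Set.insert_subset (hRsubV htR) (hT'V.trans Set.diff_subset)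
        · intro t ht
          rcases Set.mem_insert_iff.mp ht with rfl | htT'
          · rw [htinv]; exact Set.mem_insert _ _
          · exact Set.mem_insert_of_mem _ (hT'inv t htT')
        · intro v hv
          by_cases hvR : v ∈ R H g
          · have hRv : R H v = R H g := R_eq_of_mem hvR
            refine ⟨g * h, ⟨Set.mem_insert _ _, by rw [← mem_R, hRv]; exact htR⟩, ?_⟩
            rintro t' ⟨ht'T, ht'H⟩
            rcases Set.mem_insert_iff.mp ht'T with rfl | ht'T'
            · rfl
            · exact absurd (hRv ▸ (ht'H : t' ∈ R H v)) (hT'V ht'T').2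
          · obtain ⟨t, ⟨htT', htH⟩, huniq⟩ := hT'u v ⟨hv, hvR⟩
            refine ⟨t, ⟨Set.mem_insert_of_mem _ htT', htH⟩, ?_⟩
            rintro t' ⟨ht'T, ht'H⟩
            rcases Set.mem_insert_iff.mp ht'T with rfl | ht'T'
            · exfalso
              have : R H v = R H g := R_eq_of_nonempty ⟨g * h, ht'H, htR⟩
              exact hvR (this ▸ self_mem_R)
            · exact huniq t' ⟨ht'T', ht'H⟩
      · -- Case A2
        have hdvd := hJ3 g hg hN
        have hgVD : g ∈ V ∩ D H g := ⟨hg, self_mem_D⟩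
        have hpos : 0 < (V ∩ D H g).ncard :=
          (Set.ncard_pos (Set.toFinite _)).mpr ⟨g, hgVD⟩
        have hbig : 2 * Nat.card H ≤ (V ∩ D H g).ncard := Nat.le_of_dvd hpos hdvd
        have hRsubV : R H g ⊆ V := R_subset_of_closed hcl hg
        have hRsubVD : R H g ⊆ V ∩ D H g :=
          fun z hz => ⟨hRsubV hz, R_subset_D hz⟩
        have hex : ∃ u', u' ∈ (V ∩ D H g) \ R H g := by
          by_contra hc
          push_neg at hc
          have hsub : V ∩ D H g ⊆ R H g := by
            intro z hz
            by_contra hzc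
            exact hc z ⟨hz, hzc⟩
          have := Set.ncard_le_ncard hsub (Set.toFinite _)
          rw [R_ncard] at this
          omega
        obtain ⟨u', ⟨hu'V, hu'D⟩, hu'R⟩ := hex
        have hDu' : D H u' = D H g := D_eq_of_mem hu'D
        have hginvDu' : g⁻¹ ∈ D H u' := by rw [hDu']; exact hself
        obtain ⟨a, ha, b, hb, hginv⟩ := hginvDu'
        have huRu' : g⁻¹ * b⁻¹ ∈ R H u' := by
          rw [mem_R]
          have he : g⁻¹ * b⁻¹ * u'⁻¹ = a := by rw [hginv]; group
          rw [he]; exact ha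
        have huinvRg : (g⁻¹ * b⁻¹)⁻¹ ∈ R H g := by
          rw [mem_R]
          have he : (g⁻¹ * b⁻¹)⁻¹ * g⁻¹ = b := by group
          rw [he]; exact hb
        set u := g⁻¹ * b⁻¹ with hudef
        have hRne : R H g ∩ R H u' = ∅ := by
          by_contra hc
          have := R_eq_of_nonempty (Set.nonempty_iff_ne_empty.mpr hc)
          exact hu'R (this ▸ self_mem_R)
        have hdisj : Disjoint (R H g) (R H u') := Set.disjoint_iff_inter_eq_empty.mpr hRne
        have hRu'subV : R H u' ⊆ V := R_subset_of_closed hcl hu'V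
        have hAsubV : R H g ∪ R H u' ⊆ V := Set.union_subset hRsubV hRu'subV
        have hAcard : (R H g ∪ R H u').ncard = 2 * Nat.card H := by
          rw [Set.ncard_union_eq hdisj (Set.toFinite _) (Set.toFinite _), R_ncard, R_ncard]
          ring
        have hd : (V \ (R H g ∪ R H u')).ncard = V.ncard - 2 * Nat.card H := by
          rw [Set.ncard_diff hAsubV (Set.toFinite _), hAcard]
        have hVbig : 2 * Nat.card H ≤ V.ncard := by
          rw [← hAcard]
          exact Set.ncard_le_ncard hAsubV (Set.toFinite _)
        have hn' : (V \ (R H g ∪ R H u')).ncard ≤ n := by omega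
        have hclA : ∀ v ∈ R H g ∪ R H u', ∀ h' ∈ H, h' * v ∈ R H g ∪ R H u' := by
          rintro v (hv | hv) h' hh'
          · exact Or.inl (R_mul_left hv hh')
          · exact Or.inr (R_mul_left hv hh')
        have hcl' := closed_diff hcl hclA
        have hAD : ∀ z ∈ R H g ∪ R H u', D H z = D H g := by
          rintro z (hz | hz)
          · exact D_eq_of_mem (R_subset_D hz)
          · rw [D_eq_of_mem (R_subset_D hz)]; exact hDu'
        have hJ2' : ∀ v ∈ V \ (R H g ∪ R H u'), v⁻¹ ∉ D H v →
            D H v ⊆ V \ (R H g ∪ R H u') ∧ D H v⁻¹ ⊆ V \ (R H g ∪ R H u') := by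
          rintro v ⟨hv, hvA⟩ hvs
          obtain ⟨hD1, hD2⟩ := hJ2 v hv hvs
          constructor
          · intro z hz
            refine ⟨hD1 hz, fun hc => hvs ?_⟩
            have he : D H v = D H g := by
              rw [← D_eq_of_mem hz, hAD z hc]
            exact self_paired_trans hself (he ▸ self_mem_D)
          · intro z hz
            refine ⟨hD2 hz, fun hc => hvs ?_⟩
            have he : D H v⁻¹ = D H g := by
              rw [← D_eq_of_mem hz, hAD z hc]
            exact self_paired_trans' hself (he ▸ self_mem_D)
        have hJ3' : ∀ v ∈ V \ (R H g ∪ R H u'), v ∉ Subgroup.normalizer (H : Set G) →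
            2 * Nat.card H ∣ ((V \ (R H g ∪ R H u')) ∩ D H v).ncard := by
          rintro v ⟨hv, hvA⟩ hvN
          by_cases hDvg : D H v = D H g
          · have hset : (V \ (R H g ∪ R H u')) ∩ D H v
                = (V ∩ D H v) \ (R H g ∪ R H u') := by
              ext z
              simp only [Set.mem_inter_iff, Set.mem_diff]
              tauto
            have hAsub : R H g ∪ R H u' ⊆ V ∩ D H v := by
              intro z hz
              refine ⟨hAsubV hz, ?_⟩
              rw [hDvg, ← hAD z hz]
              exact self_mem_D
            rw [hset, Set.ncard_diff hAsub (Set.toFinite _), hAcard]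
            exact Nat.dvd_sub (hJ3 v hv hvN) dvd_rfl
          · have hset : (V \ (R H g ∪ R H u')) ∩ D H v = V ∩ D H v := by
              ext z
              simp only [Set.mem_inter_iff, Set.mem_diff]
              constructor
              · rintro ⟨⟨h1, _⟩, h2⟩; exact ⟨h1, h2⟩
              · rintro ⟨h1, h2⟩
                refine ⟨⟨h1, fun hc => hDvg ?_⟩, h2⟩
                rw [← D_eq_of_mem h2, hAD z hc]
            rw [hset]
            exact hJ3 v hv hvN
        obtain ⟨T', hT'V, hT'inv, hT'u⟩ :=
          ih (V \ (R H g ∪ R H u')) hn' hcl' hJ2' hJ3'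
        have huV : u ∈ V := hRu'subV huRu'
        have huinvV : u⁻¹ ∈ V := hRsubV huinvRg
        refine ⟨insert u (insert u⁻¹ T'), ?_, ?_, ?_⟩
        · refine Set.insert_subset huV (Set.insert_subset huinvV (hT'V.trans Set.diff_subset))
        · intro t ht
          rcases Set.mem_insert_iff.mp ht with rfl | ht
          · exact Set.mem_insert_of_mem _ (Set.mem_insert _ _)
          rcases Set.mem_insert_iff.mp ht with rfl | ht
          · rw [inv_inv]; exact Set.mem_insert _ _
          · exact Set.mem_insert_of_mem _ (Set.mem_insert_of_mem _ (hT'inv t ht))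
        · intro v hv
          by_cases hvRg : v ∈ R H g
          · have hRv : R H v = R H g := R_eq_of_mem hvRg
            refine ⟨u⁻¹, ⟨Set.mem_insert_of_mem _ (Set.mem_insert _ _),
              by rw [← mem_R, hRv]; exact huinvRg⟩, ?_⟩
            rintro t' ⟨ht'T, ht'H⟩
            have ht'Rv : t' ∈ R H v := ht'H
            rw [hRv] at ht'Rv
            rcases Set.mem_insert_iff.mp ht'T with rfl | ht'T
            · exfalso
              exact Set.eq_empty_iff_forall_notMem.mp hRne u ⟨ht'Rv, huRu'⟩
            rcases Set.mem_insert_iff.mp ht'T with rfl | ht'T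
            · rfl
            · exact absurd (Or.inl ht'Rv) (hT'V ht'T).2
          · by_cases hvRu' : v ∈ R H u'
            · have hRv : R H v = R H u' := R_eq_of_mem hvRu'
              refine ⟨u, ⟨Set.mem_insert _ _,
                by rw [← mem_R, hRv]; exact huRu'⟩, ?_⟩
              rintro t' ⟨ht'T, ht'H⟩
              have ht'Rv : t' ∈ R H v := ht'H
              rw [hRv] at ht'Rv
              rcases Set.mem_insert_iff.mp ht'T with rfl | ht'T
              · rfl
              rcases Set.mem_insert_iff.mp ht'T with rfl | ht'T
              · exfalso
                exact Set.eq_empty_iff_forall_notMem.mp hRne u⁻¹ ⟨huinvRg, ht'Rv⟩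
              · exact absurd (Or.inr ht'Rv) (hT'V ht'T).2
            · obtain ⟨t, ⟨htT', htH⟩, huniq⟩ := hT'u v ⟨hv, fun hc => by
                rcases hc with hc | hc
                exacts [hvRg hc, hvRu' hc]⟩
              refine ⟨t, ⟨Set.mem_insert_of_mem _ (Set.mem_insert_of_mem _ htT'), htH⟩, ?_⟩
              rintro t' ⟨ht'T, ht'H⟩
              have ht'Rv : t' ∈ R H v := ht'H
              rcases Set.mem_insert_iff.mp ht'T with rfl | ht'T
              · exfalso
                have : R H v = R H u' := R_eq_of_nonempty ⟨u, ht'Rv, huRu'⟩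
                exact hvRu' (this ▸ self_mem_R)
              rcases Set.mem_insert_iff.mp ht'T with rfl | ht'T
              · exfalso
                have : R H v = R H g := R_eq_of_nonempty ⟨u⁻¹, ht'Rv, huinvRg⟩
                exact hvRg (this ▸ self_mem_R)
              · exact huniq t' ⟨ht'T, ht'H⟩
    · -- Case B
      obtain ⟨hD1, hD2⟩ := hJ2 g hg hself
      have hDdisj : D H g ∩ D H g⁻¹ = ∅ := by
        by_contra hc
        have he := D_eq_of_nonempty (Set.nonempty_iff_ne_empty.mpr hc)
        exact hself (by rw [he]; exact self_mem_D)
      obtain ⟨T₁, hT₁s, _, hT₁R, hT₁L⟩ :=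
        zip g ((D H g).ncard) (D H g) (D H g) le_rfl (subset_refl _) (subset_refl _)
          (fun v hv h hh => D_mul_left hv hh) (fun v hv h hh => D_mul_right hv hh) rfl
      have hT₁inv_sub : T₁⁻¹ ⊆ D H g⁻¹ := by
        intro z hz
        have h1 : z⁻¹ ∈ D H g := hT₁s (Set.mem_inv.mp hz)
        have h2 := inv_mem_D h1
        rwa [inv_inv] at h2
      have hAsubV : D H g ∪ D H g⁻¹ ⊆ V := Set.union_subset hD1 hD2
      have hgA : g ∈ D H g ∪ D H g⁻¹ := Or.inl self_mem_D
      have hss : V \ (D H g ∪ D H g⁻¹) ⊂ V :=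
        ⟨Set.diff_subset, fun hsub => (hsub hg).2 hgA⟩
      have hn' : (V \ (D H g ∪ D H g⁻¹)).ncard ≤ n := by
        have := Set.ncard_lt_ncard hss (Set.toFinite _)
        omega
      have hclA : ∀ v ∈ D H g ∪ D H g⁻¹, ∀ h' ∈ H, h' * v ∈ D H g ∪ D H g⁻¹ := by
        rintro v (hv | hv) h' hh'
        · exact Or.inl (D_mul_left hv hh')
        · exact Or.inr (D_mul_left hv hh')
      have hcl' := closed_diff hcl hclA
      have hAD : ∀ z ∈ D H g ∪ D H g⁻¹, D H z = D H g ∨ D H z = D H g⁻¹ := by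
        rintro z (hz | hz)
        · exact Or.inl (D_eq_of_mem hz)
        · exact Or.inr (D_eq_of_mem hz)
      have hnotA : ∀ v ∈ V \ (D H g ∪ D H g⁻¹), D H v ∩ (D H g ∪ D H g⁻¹) = ∅ := by
        rintro v ⟨hv, hvA⟩
        by_contra hc
        obtain ⟨z, hz1, hz2⟩ := Set.nonempty_iff_ne_empty.mpr hc
        rcases hAD z hz2 with he | he
        · exact hvA (Or.inl (by rw [← he, D_eq_of_mem hz1]; exact self_mem_D))
        · exact hvA (Or.inr (by rw [← he, D_eq_of_mem hz1]; exact self_mem_D))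
      have hJ2' : ∀ v ∈ V \ (D H g ∪ D H g⁻¹), v⁻¹ ∉ D H v →
          D H v ⊆ V \ (D H g ∪ D H g⁻¹) ∧ D H v⁻¹ ⊆ V \ (D H g ∪ D H g⁻¹) := by
        rintro v hvd hvs
        obtain ⟨hv, hvA⟩ := hvd
        obtain ⟨hE1, hE2⟩ := hJ2 v hv hvs
        have h1 := hnotA v ⟨hv, hvA⟩
        constructor
        · intro z hz
          exact ⟨hE1 hz, fun hc => Set.eq_empty_iff_forall_notMem.mp h1 z ⟨hz, hc⟩⟩
        · intro z hz
          refine ⟨hE2 hz, fun hc => ?_⟩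
          rcases hAD z hc with he | he
          · have hvv : D H v⁻¹ = D H g := (D_eq_of_mem hz).symm.trans he
            have hvg : D H v = D H g⁻¹ := by
              calc D H v = (D H v⁻¹)⁻¹ := by rw [D_inv_set, inv_inv]
                _ = (D H g)⁻¹ := by rw [hvv]
                _ = D H g⁻¹ := D_inv_set
            exact hvA (Or.inr (hvg ▸ self_mem_D))
          · have hvv : D H v⁻¹ = D H g⁻¹ := (D_eq_of_mem hz).symm.trans he
            have hvg : D H v = D H g := by
              calc D H v = (D H v⁻¹)⁻¹ := by rw [D_inv_set, inv_inv]
                _ = (D H g⁻¹)⁻¹ := by rw [hvv]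
                _ = D H g⁻¹⁻¹ := D_inv_set
                _ = D H g := by rw [inv_inv]
            exact hvA (Or.inl (hvg ▸ self_mem_D))
      have hJ3' : ∀ v ∈ V \ (D H g ∪ D H g⁻¹), v ∉ Subgroup.normalizer (H : Set G) →
          2 * Nat.card H ∣ ((V \ (D H g ∪ D H g⁻¹)) ∩ D H v).ncard := by
        rintro v ⟨hv, hvA⟩ hvN
        have h1 := hnotA v ⟨hv, hvA⟩
        have hset : (V \ (D H g ∪ D H g⁻¹)) ∩ D H v = V ∩ D H v := by
          ext z
          simp only [Set.mem_inter_iff, Set.mem_diff]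
          constructor
          · rintro ⟨⟨z1, _⟩, z2⟩; exact ⟨z1, z2⟩
          · rintro ⟨z1, z2⟩
            exact ⟨⟨z1, fun hc => Set.eq_empty_iff_forall_notMem.mp h1 z ⟨z2, hc⟩⟩, z2⟩
        rw [hset]; exact hJ3 v hv hvN
      obtain ⟨T', hT'V, hT'inv, hT'u⟩ := ih (V \ (D H g ∪ D H g⁻¹)) hn' hcl' hJ2' hJ3'
      refine ⟨(T₁ ∪ T₁⁻¹) ∪ T', ?_, ?_, ?_⟩
      · exact Set.union_subset
          (Set.union_subset (hT₁s.trans hD1) (hT₁inv_sub.trans hD2))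
          (hT'V.trans Set.diff_subset)
      · intro t ht
        rcases ht with (ht | ht) | ht
        · exact Or.inl (Or.inr (Set.inv_mem_inv.mpr ht))
        · exact Or.inl (Or.inl (by rwa [Set.mem_inv] at ht))
        · exact Or.inr (hT'inv t ht)
      · intro v hv
        by_cases hvDg : v ∈ D H g
        · obtain ⟨t, ⟨htT₁, htH⟩, huniq⟩ := hT₁R v hvDg
          refine ⟨t, ⟨Or.inl (Or.inl htT₁), htH⟩, ?_⟩
          rintro t' ⟨ht'T, ht'H⟩
          have ht'Rv : t' ∈ R H v := ht'H
          have ht'Dg : t' ∈ D H g := by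
            rw [← D_eq_of_mem hvDg]
            exact R_subset_D ht'Rv
          rcases ht'T with (h1 | h1) | h1
          · exact huniq t' ⟨h1, ht'H⟩
          · exact (Set.eq_empty_iff_forall_notMem.mp hDdisj t' ⟨ht'Dg, hT₁inv_sub h1⟩).elim
          · exact ((hT'V h1).2 (Or.inl ht'Dg)).elim
        · by_cases hvDg' : v ∈ D H g⁻¹
          · have hvinv : v⁻¹ ∈ D H g := by
              have h1 := inv_mem_D hvDg'
              rwa [inv_inv] at h1
            obtain ⟨s, ⟨hsT₁, hsH⟩, huniq⟩ := hT₁L v⁻¹ hvinv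
            rw [inv_inv] at hsH
            refine ⟨s⁻¹, ⟨Or.inl (Or.inr (Set.inv_mem_inv.mpr hsT₁)), ?_⟩, ?_⟩
            · have he : s⁻¹ * v⁻¹ = (v * s)⁻¹ := by group
              rw [he]; exact inv_mem hsH
            · rintro t' ⟨ht'T, ht'H⟩
              have ht'Rv : t' ∈ R H v := ht'H
              have ht'Dg' : t' ∈ D H g⁻¹ := by
                rw [← D_eq_of_mem hvDg']
                exact R_subset_D ht'Rv
              rcases ht'T with (h1 | h1) | h1
              · exact (Set.eq_empty_iff_forall_notMem.mp hDdisj t' ⟨hT₁s h1, ht'Dg'⟩).elim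
              · have h2 : t'⁻¹ ∈ T₁ := Set.mem_inv.mp h1
                have h3 : v * t'⁻¹ ∈ H := by
                  have he : v * t'⁻¹ = (t' * v⁻¹)⁻¹ := by group
                  rw [he]; exact inv_mem ht'H
                have h4 : (v⁻¹)⁻¹ * t'⁻¹ ∈ H := by rwa [inv_inv]
                have h5 := huniq t'⁻¹ ⟨h2, h4⟩
                rw [← h5, inv_inv]
              · exact ((hT'V h1).2 (Or.inr ht'Dg')).elim
          · obtain ⟨t, ⟨htT', htH⟩, huniq⟩ := hT'u v ⟨hv, fun hc => by
              rcases hc with hc | hc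
              exacts [hvDg hc, hvDg' hc]⟩
            refine ⟨t, ⟨Or.inr htT', htH⟩, ?_⟩
            rintro t' ⟨ht'T, ht'H⟩
            have ht'Rv : t' ∈ R H v := ht'H
            rcases ht'T with (h1 | h1) | h1
            · exfalso
              have he : D H v = D H g := D_eq_of_nonempty ⟨t', R_subset_D ht'Rv, hT₁s h1⟩
              exact hvDg (he ▸ self_mem_D)
            · exfalso
              have he : D H v = D H g⁻¹ :=
                D_eq_of_nonempty ⟨t', R_subset_D ht'Rv, hT₁inv_sub h1⟩
              exact hvDg' (he ▸ self_mem_D)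
            · exact huniq t' ⟨h1, ht'H⟩

end PCaux

/-- A 2-subgroup `H` of a finite group `G` is a perfect code of `G` iff
`Φ(N_G(H), H)` holds. -/
theorem stmt2 {G : Type*} [Group G] [Fintype G] (H : Subgroup G)
    (h2 : ∃ k : ℕ, Nat.card H = 2 ^ k) :
    (∃ S : Set G, (∀ s ∈ S, s⁻¹ ∈ S) ∧ (1 : G) ∉ S ∧
        IsPerfectCode S (H : Set G)) ↔
    (∀ g ∈ Subgroup.normalizer (H : Set G), g * g ∈ H → ∃ h ∈ H, (g * h) * (g * h) = 1) := by
  constructor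
  · rintro ⟨S, hSinv, hS1, hInd, hUniq⟩ g hgN hgg
    by_cases hgH : g ∈ H
    · exact ⟨g⁻¹, inv_mem hgH, by simp⟩
    · obtain ⟨c, ⟨hcH, hcS⟩, huniq⟩ := hUniq g hgH
      have hcH' : c ∈ H := hcH
      have hc1 : g * c⁻¹ * g⁻¹ ∈ H :=
        (Subgroup.mem_normalizer_iff.mp hgN c⁻¹).mp (inv_mem hcH')
      have hc2 : g * c⁻¹ * g⁻¹ * (g * g) ∈ H := mul_mem hc1 hgg
      have hc3 : (g * c⁻¹ * g⁻¹ * (g * g)) * g⁻¹ ∈ S := by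
        have he : (g * c⁻¹ * g⁻¹ * (g * g)) * g⁻¹ = (c * g⁻¹)⁻¹ := by group
        rw [he]; exact hSinv _ hcS
      have hcc : g * c⁻¹ * g⁻¹ * (g * g) = c := huniq _ ⟨hc2, hc3⟩
      have h4 : g * c⁻¹ * g = c := by
        calc g * c⁻¹ * g = g * c⁻¹ * g⁻¹ * (g * g) := by group
          _ = c := hcc
      refine ⟨c⁻¹, inv_mem hcH', ?_⟩
      calc (g * c⁻¹) * (g * c⁻¹) = (g * c⁻¹ * g) * c⁻¹ := by group
        _ = c * c⁻¹ := by rw [h4]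
        _ = 1 := by simp
  · intro hΦ
    obtain ⟨k, hk⟩ := h2
    obtain ⟨T, _, hTinv, hTu⟩ := PCaux.main (H := H) hΦ (Set.univ.ncard) Set.univ
      le_rfl (fun v _ h _ => Set.mem_univ _)
      (fun v _ _ => ⟨Set.subset_univ _, Set.subset_univ _⟩)
      (fun v _ hvN => by
        rw [Set.univ_inter]
        exact PCaux.D_ncard_even hk hvN)
    obtain ⟨t₀, ⟨ht₀T, ht₀H⟩, ht₀u⟩ := hTu 1 (Set.mem_univ 1)
    have ht₀H' : t₀ ∈ H := by simpa using ht₀H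
    refine ⟨T \ {t₀}, ?_, ?_, ?_, ?_⟩
    · rintro s ⟨hsT, hs0⟩
      refine ⟨hTinv s hsT, fun hc => ?_⟩
      have hc' : s⁻¹ = t₀ := Set.mem_singleton_iff.mp hc
      have ht₀inv : t₀⁻¹ = t₀ :=
        ht₀u t₀⁻¹ ⟨hTinv _ ht₀T, by simpa using inv_mem ht₀H'⟩
      have : s = t₀ := by rw [← inv_inv s, hc', ht₀inv]
      exact hs0 (Set.mem_singleton_iff.mpr this)
    · rintro ⟨h1T, h10⟩
      exact h10 (Set.mem_singleton_iff.mpr (ht₀u 1 ⟨h1T, by simpa using one_mem H⟩))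
    · intro c hcH c' hc'H hne
      rintro ⟨hsT, hs0⟩
      have hmem : c' * c⁻¹ ∈ H := mul_mem hc'H (inv_mem hcH)
      exact hs0 (Set.mem_singleton_iff.mpr (ht₀u _ ⟨hsT, by simpa using hmem⟩))
    · intro g hgH
      obtain ⟨t, ⟨htT, htH⟩, htu⟩ := hTu g⁻¹ (Set.mem_univ _)
      rw [inv_inv] at htH
      have htne : t ≠ t₀ := by
        intro hc
        rw [hc] at htH
        have : t₀⁻¹ * (t₀ * g) ∈ H := mul_mem (inv_mem ht₀H') htH
        simp only [inv_mul_cancel_left] at this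
        exact hgH this
      refine ⟨t * g, ⟨htH, ?_⟩, ?_⟩
      · have he : t * g * g⁻¹ = t := by group
        rw [he]
        exact ⟨htT, fun hc => htne (Set.mem_singleton_iff.mp hc)⟩
      · rintro c ⟨hcH, hcS⟩
        have h5 := htu (c * g⁻¹) ⟨hcS.1, by simpa [inv_inv] using hcH⟩
        rw [← h5]; group
end

section
/- Let q = 2^n and α ∈ F_{q²} with α² = sα + t, s ∈ F_q, t ∈ F_q^*, and F_{q²} = F_q ⊕ F_q α. Let g = ((0, α+s)ᵀ, [[1, α],[0, 1]]) ∈ AGL(2,q²). Then for every h = ((u,v)ᵀ, I₂) with u, v ∈ F_q, one has (gh)² = ((vα + t, 0)ᵀ, I₂) ≠ (0, I₂). In particular, the condition Φ(AGL(2,q²), H_q) fails. -/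
open Matrix

/-- The affine group `F² ⋊ GL₂(F)`: pairs `(v, m)` with multiplication
`(a, A)(b, B) = (a + Ab, AB)`. -/
@[ext]
structure Aff (F : Type*) [Field F] where
  v : Fin 2 → F
  m : GL (Fin 2) F

namespace Aff

variable {F : Type*} [Field F]

instance : Mul (Aff F) :=
  ⟨fun g h => ⟨g.v + (g.m : Matrix (Fin 2) (Fin 2) F) *ᵥ h.v, g.m * h.m⟩⟩

instance : One (Aff F) := ⟨⟨0, 1⟩⟩

instance : Inv (Aff F) :=
  ⟨fun g => ⟨-(((g.m⁻¹ : GL (Fin 2) F) : Matrix (Fin 2) (Fin 2) F) *ᵥ g.v), g.m⁻¹⟩⟩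

@[simp] lemma mul_v (g h : Aff F) :
    (g * h).v = g.v + (g.m : Matrix (Fin 2) (Fin 2) F) *ᵥ h.v := rfl
@[simp] lemma mul_m (g h : Aff F) : (g * h).m = g.m * h.m := rfl
@[simp] lemma one_v : (1 : Aff F).v = 0 := rfl
@[simp] lemma one_m : (1 : Aff F).m = 1 := rfl
@[simp] lemma inv_v (g : Aff F) :
    (g⁻¹).v = -(((g.m⁻¹ : GL (Fin 2) F) : Matrix (Fin 2) (Fin 2) F) *ᵥ g.v) := rfl
@[simp] lemma inv_m (g : Aff F) : (g⁻¹).m = g.m⁻¹ := rfl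

instance : Group (Aff F) where
  mul_assoc a b c := by
    ext : 1 <;>
      simp only [mul_v, mul_m, Matrix.mulVec_add, Matrix.mulVec_mulVec, add_assoc, Units.val_mul,
        mul_assoc]
  one_mul a := by ext : 1 <;> simp
  mul_one a := by ext : 1 <;> simp
  inv_mul_cancel a := by
    ext : 1 <;> simp [Matrix.mulVec_mulVec, ← Units.val_mul]

end Aff

/-- The subgroup `H_q` of translations by vectors with entries in the subfield. -/
def Hq (F K : Type*) [Field F] [Field K] [Algebra F K] : Set (Aff K) :=
  {g : Aff K | (∀ i, g.v i ∈ Set.range (algebraMap F K)) ∧ g.m = 1}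

/-- For `g = ((0, α+s)ᵀ, [[1,α],[0,1]])` and every `h = ((u,v)ᵀ, I₂)` with
`u, v ∈ F_q`, one has `(gh)² = ((vα + t, 0)ᵀ, I₂) ≠ 1`. In particular
`Φ(AGL(2,q²), H_q)` fails. -/
theorem stmt5 {F K : Type*} [Field F] [Field K] [Algebra F K] [Fintype F]
    (n : ℕ) (hn : 1 ≤ n) (hF : Fintype.card F = 2 ^ n)
    (hK : Module.finrank F K = 2)
    (α : K) (hα : α ∉ Set.range (algebraMap F K))
    (s : F) (t : F) (ht : t ≠ 0)
    (hα2 : α ^ 2 = algebraMap F K s * α + algebraMap F K t)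
    (A : GL (Fin 2) K)
    (hA : (A : Matrix (Fin 2) (Fin 2) K) = !![1, α; 0, 1])
    (g : Aff K) (hg : g = ⟨![0, α + algebraMap F K s], A⟩) :
    (∀ u v : F, ∀ h : Aff K, h = ⟨![algebraMap F K u, algebraMap F K v], 1⟩ →
        (g * h) * (g * h) = ⟨![algebraMap F K v * α + algebraMap F K t, 0], 1⟩ ∧
        (g * h) * (g * h) ≠ 1) ∧
    ∃ x : Aff K, x * x ∈ Hq F K ∧ ∀ h ∈ Hq F K, (x * h) * (x * h) ≠ 1 := by
  have hF2 : CharP F 2 := by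
    haveI h1 : Fact (Nat.Prime 2) := ⟨Nat.prime_two⟩
    have hp : (ringChar F).Prime := CharP.char_is_prime F (ringChar F)
    have hdvd : (2 : ℕ) ∣ ringChar F :=
      (prime_dvd_char_iff_dvd_card 2).mpr (by rw [hF]; exact dvd_pow_self 2 (by omega))
    have h2 : ringChar F = 2 := ((Nat.prime_dvd_prime_iff_eq Nat.prime_two hp).mp hdvd).symm
    exact h2 ▸ ringChar.charP F
  haveI hK2 : CharP K 2 := charP_of_injective_algebraMap (algebraMap F K).injective 2
  have two0 : (2 : K) = 0 := CharP.cast_eq_zero K 2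
  have hinj : Function.Injective (algebraMap F K) := (algebraMap F K).injective
  have hAA : A * A = 1 := by
    apply Units.ext
    show (A : Matrix (Fin 2) (Fin 2) K) * (A : Matrix (Fin 2) (Fin 2) K) = 1
    rw [hA]
    ext i j
    fin_cases i <;> fin_cases j <;>
      simp [Matrix.mul_apply, Fin.sum_univ_two, Matrix.one_apply] <;>
      linear_combination α * two0
  have key : ∀ u v : F, ∀ h : Aff K, h = ⟨![algebraMap F K u, algebraMap F K v], 1⟩ →
      (g * h) * (g * h) = ⟨![algebraMap F K v * α + algebraMap F K t, 0], 1⟩ := by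
    intro u v h hh
    subst hg hh
    ext : 1
    · funext i
      fin_cases i <;>
        simp [Matrix.mulVec, dotProduct, Fin.sum_univ_two, hA, Matrix.vecHead,
          Matrix.vecTail, Pi.smul_apply, smul_eq_mul, Function.comp, Algebra.smul_def]
      · linear_combination hα2 + (algebraMap F K u + α * algebraMap F K v + algebraMap F K s * α) * two0
      · linear_combination (α + algebraMap F K s + algebraMap F K v) * two0
    · simpa using hAA
  have ne1 : ∀ v : F, (⟨![algebraMap F K v * α + algebraMap F K t, 0], 1⟩ : Aff K) ≠ 1 := by
    intro v hc
    have hv0 : algebraMap F K v * α + algebraMap F K t = 0 := by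
      have := congrArg Aff.v hc
      exact congrFun this 0
    by_cases hv : v = 0
    · apply ht
      apply hinj
      simpa [hv] using hv0
    · apply hα
      refine ⟨-(t / v), ?_⟩
      have hv' : algebraMap F K v ≠ 0 := fun hc2 => hv (hinj (by simpa using hc2))
      rw [map_neg, map_div₀]
      field_simp
      linear_combination -hv0
  refine ⟨fun u v h hh => ⟨key u v h hh, by rw [key u v h hh]; exact ne1 v⟩, g, ?_, ?_⟩
  · have hz : ![(0 : K), 0] = (0 : Fin 2 → K) := by
      funext i; fin_cases i <;> simp
    have h0 : g * (⟨![algebraMap F K 0, algebraMap F K 0], 1⟩ : Aff K) = g := by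
      ext : 1 <;> simp [hz]
    have hg0 : g * g = ⟨![algebraMap F K 0 * α + algebraMap F K t, 0], 1⟩ := by
      conv_lhs => rw [← h0]
      exact key 0 0 _ rfl
    rw [hg0]
    refine ⟨fun i => ?_, rfl⟩
    fin_cases i
    · exact ⟨t, by simp⟩
    · exact ⟨0, by simp⟩
  · intro h hh
    obtain ⟨hhv, hhm⟩ := hh
    obtain ⟨u, hu⟩ := hhv 0
    obtain ⟨v, hv⟩ := hhv 1
    have hh' : h = ⟨![algebraMap F K u, algebraMap F K v], 1⟩ := by
      ext : 1
      · funext i; fin_cases i <;> simp [hu, hv]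
      · exact hhm
    rw [key u v h hh']
    exact ne1 v
end

section
/- There exists a finite group G and a non-normal subgroup H ≤ G such that H is a subgroup perfect code of G but the condition Φ(G,H) fails; i.e., there exists g ∈ G with g² ∈ H and (gh)² ≠ e for all h ∈ H. (For instance G = AGL(2,4), H = H_2 with q = 2.) -/
/-- `H` is a subgroup perfect code of `G`. -/
def IsSubgroupPerfectCode {G : Type*} [Group G] (H : Subgroup G) : Prop :=
  ∃ S : Set G, (∀ s ∈ S, s⁻¹ ∈ S) ∧ (1 : G) ∉ S ∧ IsPerfectCode S (H : Set G)

/-- The condition `Φ(G, H)` fails: some `g ∈ G` has `g² ∈ H` but `(gh)² ≠ e`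
for all `h ∈ H`. -/
def PhiFails {G : Type*} [Group G] (H : Subgroup G) : Prop :=
  ∃ g : G, g * g ∈ H ∧ ∀ h ∈ H, (g * h) * (g * h) ≠ 1

/- A concrete group of order 16 (a subgroup of AGL(2,4)), given by its Cayley
table packed into a natural number (4 bits per entry). -/
def G16 : Type := Fin 16

instance : DecidableEq G16 := instDecidableEqFin 16
instance : Fintype G16 := Fin.fintype 16
instance (n : ℕ) : OfNat G16 n := inferInstanceAs (OfNat (Fin 16) n)

namespace G16

def tbl : ℕ := 158494771669680241780919331540838593863454382283589462760792772368392228766138825698217533851476789233801687467848588232392452687923230933334920141373384488956711035428961784619670301039902450860448956521626174196913471245166791104974059710332511475054272298910710711796546581398099393279101864797465042235920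

def itbl : ℕ := 2183317378213716720

def mul' (a b : G16) : G16 :=
  ⟨(tbl >>> (4 * (16 * (a : Fin 16).val + (b : Fin 16).val))) % 16, Nat.mod_lt _ (by norm_num)⟩

def inv' (a : G16) : G16 :=
  ⟨(itbl >>> (4 * (a : Fin 16).val)) % 16, Nat.mod_lt _ (by norm_num)⟩

instance instGroup : Group G16 where
  mul := mul'
  one := (0 : Fin 16)
  inv := inv'
  mul_assoc := by decide
  one_mul := by decide
  mul_one := by decide
  inv_mul_cancel := by decide

def H : Subgroup G16 where
  carrier := {x | x = (0 : G16) ∨ x = (5 : G16) ∨ x = (11 : G16) ∨ x = (14 : G16)}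
  mul_mem' := by decide
  one_mem' := by decide
  inv_mem' := by decide

instance : DecidablePred (· ∈ (H : Set G16)) := fun _ =>
  inferInstanceAs (Decidable (_ ∨ _))

instance : DecidablePred (· ∈ H) := fun _ =>
  inferInstanceAs (Decidable (_ ∨ _))

end G16

/-- There exist a finite group `G` and a non-normal subgroup `H ≤ G` such that
`H` is a subgroup perfect code of `G` but `Φ(G, H)` fails. -/
theorem stmt13 :
    ∃ (G : Type) (iG : Group G), Finite G ∧
      ∃ H : @Subgroup G iG, ¬ @Subgroup.Normal G iG H ∧
        @IsSubgroupPerfectCode G iG H ∧ @PhiFails G iG H := by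
  refine ⟨G16, G16.instGroup, Finite.of_fintype G16, G16.H, ?_, ?_, ?_⟩
  · intro hn
    exact absurd (hn.conj_mem (5 : G16) (by decide) (1 : G16)) (by decide)
  · refine ⟨{x | x = (2 : G16) ∨ x = (4 : G16) ∨ x = (13 : G16)}, by decide, by decide, by decide, ?_⟩
    intro g hg
    have : ∃ c, (c ∈ (G16.H : Set G16) ∧ c * g⁻¹ ∈ {x | x = (2 : G16) ∨ x = (4 : G16) ∨ x = (13 : G16)}) ∧
        ∀ y, (y ∈ (G16.H : Set G16) ∧ y * g⁻¹ ∈ {x | x = (2 : G16) ∨ x = (4 : G16) ∨ x = (13 : G16)}) → y = c := by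
      revert hg
      revert g
      decide
    exact this
  · exact ⟨(15 : G16), by decide, by decide⟩
end
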